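/- arXiv:2206.00956 — 3 statements merged into one kernel-verified Lean document; each statement's English description precedes it below -/
import Mathlib

section
/- Let ℝ^N = ℝ^p ⊕ ℝ^q be the orthogonal splitting with p+q = N, where ℝ^p is spanned by e₁,…,e_p and ℝ^q by n_r := e_{p+r}, r = 1,…,q. Let B : ℝ^p × ℝ^p → ℝ^q be a symmetric bilinear map and let B* : ℝ^p × ℝ^q → ℝ^p be its partial adjoint, characterized by ⟨B(x,y), n⟩ = ⟨y, B*(x,n)⟩ for all x, y ∈ ℝ^p and n ∈ ℝ^q. For X ∈ ℝ^p set B(X) := Σ_{j=1}^p e_j · B(X, e_j) ∈ Cl(N). Then for all X, Y ∈ ℝ^p: (1/4)(B(Y)·B(X) − B(X)·B(Y)) = (1/2)·Σ_{1≤j<k≤p} ( ⟨B*(X, B(Y,e_j)), e_k⟩ − ⟨B*(Y, B(X,e_j)), e_k⟩ ) e_j·e_k + (1/2)·Σ_{1≤r<s≤q} ( ⟨B(X, B*(Y,n_r)), n_s⟩ − ⟨B(Y, B*(X,n_r)), n_s⟩ ) n_r·n_s. In particular, for every Z = Z_p + Z_q ∈ ℝ^p ⊕ ℝ^q, [(1/4)(B(Y)·B(X)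 − B(X)·B(Y)), Z] = B*(X, B(Y, Z_p)) − B*(Y, B(X, Z_p)) + B(X, B*(Y, Z_q)) − B(Y, B*(X, Z_q)). -/
/-!
`Cl(N)` for `N = p + q` is modelled as the Clifford algebra of `(Fin p ⊕ Fin q) → ℝ`
for the quadratic form `Qneg v = -⟨v,v⟩`, with `⟨·,·⟩ = dotp` the standard scalar product.
`ℝ^p` (spanned by `e_j := eb j` at the indices `Sum.inl j`) and `ℝ^q` (spanned by
`n_r := eb r` at the indices `Sum.inr r`) are embedded by extension by zero via `inlm`, `inrm`.
-/

noncomputable section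

/-- The standard scalar product on `ι → ℝ`. -/
def dotp {ι : Type*} [Fintype ι] (x y : ι → ℝ) : ℝ := ∑ i, x i * y i

/-- The quadratic form `Q(v) = -⟨v,v⟩` on `ι → ℝ`. -/
def Qneg (ι : Type*) [Fintype ι] : QuadraticForm ℝ (ι → ℝ) :=
  QuadraticMap.weightedSumSquares ℝ (fun _ : ι => (-1 : ℝ))

/-- The canonical embedding of `ℝ^N` in its Clifford algebra. -/
def ιC {ι : Type*} [Fintype ι] (v : ι → ℝ) : CliffordAlgebra (Qneg ι) :=
  CliffordAlgebra.ι (Qneg ι) v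

/-- The canonical basis of `ι → ℝ`. -/
def eb {ι : Type*} [DecidableEq ι] (j : ι) : ι → ℝ := Pi.single j 1

/-- The isometric inclusion `ℝ^p → ℝ^p ⊕ ℝ^q` (extension by zero). -/
def inlm (p q : ℕ) : (Fin p → ℝ) →ₗ[ℝ] ((Fin p ⊕ Fin q) → ℝ) where
  toFun x := Sum.elim x 0
  map_add' x y := by funext z; cases z <;> simp
  map_smul' c x := by funext z; cases z <;> simp

/-- The isometric inclusion `ℝ^q → ℝ^p ⊕ ℝ^q` (extension by zero). -/
def inrm (p q : ℕ) : (Fin q → ℝ) →ₗ[ℝ] ((Fin p ⊕ Fin q) → ℝ) where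
  toFun x := Sum.elim 0 x
  map_add' x y := by funext z; cases z <;> simp
  map_smul' c x := by funext z; cases z <;> simp

/-- The Clifford element `B(X) := Σ_{j=1}^p e_j · B(X, e_j) ∈ Cl(N)` associated to a
bilinear map `B : ℝ^p × ℝ^p → ℝ^q`. -/
def Bcl (p q : ℕ) (B : (Fin p → ℝ) →ₗ[ℝ] (Fin p → ℝ) →ₗ[ℝ] (Fin q → ℝ)) (X : Fin p → ℝ) :
    CliffordAlgebra (Qneg (Fin p ⊕ Fin q)) :=
  ∑ j : Fin p, ιC (inlm p q (eb j)) * ιC (inrm p q (B X (eb j)))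

namespace Aux

variable {ι : Type*} [Fintype ι]

lemma dotp_comm (x y : ι → ℝ) : dotp x y = dotp y x := by
  simp [dotp, mul_comm]

lemma dotp_eb_right [DecidableEq ι] (x : ι → ℝ) (i : ι) : dotp x (eb i) = x i := by
  simp [dotp, eb, Pi.single_apply]

lemma dotp_eb_eb [DecidableEq ι] (i j : ι) : dotp (eb i) (eb j) = if i = j then 1 else 0 := by
  rw [dotp_eb_right]; simp [eb, Pi.single_apply, eq_comm]

lemma Qneg_apply (v : ι → ℝ) : Qneg ι v = -dotp v v := by
  simp [Qneg, QuadraticMap.weightedSumSquares_apply, dotp, Finset.sum_neg_distrib]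

lemma polar_Qneg (u v : ι → ℝ) : QuadraticMap.polar (Qneg ι) u v = -2 * dotp u v := by
  have h : (∑ i, (u i + v i) * (u i + v i))
      = (∑ i, u i * u i) + (∑ i, v i * v i) + 2 * ∑ i, u i * v i := by
    rw [Finset.mul_sum, ← Finset.sum_add_distrib, ← Finset.sum_add_distrib]
    exact Finset.sum_congr rfl fun i _ => by ring
  simp only [QuadraticMap.polar, Qneg_apply, dotp, Pi.add_apply]
  rw [h]; ring

lemma anticomm (u v : ι → ℝ) :
    ιC u * ιC v = (-2 * dotp u v) • (1 : CliffordAlgebra (Qneg ι)) - ιC v * ιC u := by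
  have h := CliffordAlgebra.ι_mul_ι_add_swap (Q := Qneg ι) u v
  rw [polar_Qneg, Algebra.algebraMap_eq_smul_one] at h
  exact eq_sub_of_add_eq h

lemma ιC_sq (u : ι → ℝ) : ιC u * ιC u = (-dotp u u) • (1 : CliffordAlgebra (Qneg ι)) := by
  rw [ιC, CliffordAlgebra.ι_sq_scalar, Qneg_apply, Algebra.algebraMap_eq_smul_one]

lemma pi_expand {n : ℕ} (x : Fin n → ℝ) : x = ∑ i, x i • eb i := by
  funext j
  rw [Finset.sum_apply]
  simp [eb, Pi.single_apply]



variable {p q : ℕ}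

lemma inlm_apply (x : Fin p → ℝ) : (inlm p q x : (Fin p ⊕ Fin q) → ℝ) = Sum.elim x (0 : Fin q → ℝ) := rfl
lemma inrm_apply (x : Fin q → ℝ) : (inrm p q x : (Fin p ⊕ Fin q) → ℝ) = Sum.elim (0 : Fin p → ℝ) x := rfl

lemma dotp_inl_inl (x y : Fin p → ℝ) : dotp (inlm p q x) (inlm p q y) = dotp x y := by
  simp [dotp, inlm_apply, Fintype.sum_sum_type]

lemma dotp_inl_inr (x : Fin p → ℝ) (y : Fin q → ℝ) : dotp (inlm p q x) (inrm p q y) = 0 := by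
  simp [dotp, inlm_apply, inrm_apply, Fintype.sum_sum_type]

lemma dotp_inr_inl (x : Fin q → ℝ) (y : Fin p → ℝ) : dotp (inrm p q x) (inlm p q y) = 0 := by
  simp [dotp, inlm_apply, inrm_apply, Fintype.sum_sum_type]

lemma dotp_inr_inr (x y : Fin q → ℝ) : dotp (inrm p q x) (inrm p q y) = dotp x y := by
  simp [dotp, inrm_apply, Fintype.sum_sum_type]

def Ee (p q : ℕ) (j : Fin p) : CliffordAlgebra (Qneg (Fin p ⊕ Fin q)) := ιC (inlm p q (eb j))
def Nn (p q : ℕ) (r : Fin q) : CliffordAlgebra (Qneg (Fin p ⊕ Fin q)) := ιC (inrm p q (eb r))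

lemma NE_anti (j : Fin p) (r : Fin q) : Nn p q r * Ee p q j = -(Ee p q j * Nn p q r) := by
  have h := anticomm (inrm p q (eb r)) (inlm p q (eb j))
  rw [dotp_inr_inl] at h
  simpa [Nn, Ee] using h

lemma Ee_mul_comm (j k : Fin p) :
    Ee p q k * Ee p q j
      = ((-2 : ℝ) * if k = j then 1 else 0) • 1 - Ee p q j * Ee p q k := by
  have h := anticomm (inlm p q (eb k)) (inlm p q (eb j))
  rw [dotp_inl_inl, dotp_eb_eb] at h
  exact h

lemma Ee_anti_ne {j k : Fin p} (h : j ≠ k) : Ee p q k * Ee p q j = -(Ee p q j * Ee p q k) := by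
  have h2 := Ee_mul_comm (p := p) (q := q) j k
  rw [if_neg (Ne.symm h)] at h2
  rw [h2]; simp

lemma Ee_sq (j : Fin p) : Ee p q j * Ee p q j = (-1 : ℝ) • 1 := by
  have h := ιC_sq (inlm p q (eb j))
  rw [dotp_inl_inl, dotp_eb_eb, if_pos rfl] at h
  exact h

lemma Nn_mul_comm (r s : Fin q) :
    Nn p q s * Nn p q r
      = ((-2 : ℝ) * if s = r then 1 else 0) • 1 - Nn p q r * Nn p q s := by
  have h := anticomm (inrm p q (eb s)) (inrm p q (eb r))
  rw [dotp_inr_inr, dotp_eb_eb] at h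
  exact h

lemma Nn_anti_ne {r s : Fin q} (h : r ≠ s) : Nn p q s * Nn p q r = -(Nn p q r * Nn p q s) := by
  have h2 := Nn_mul_comm (p := p) (q := q) r s
  rw [if_neg (Ne.symm h)] at h2
  rw [h2]; simp

lemma Nn_sq (r : Fin q) : Nn p q r * Nn p q r = (-1 : ℝ) • 1 := by
  have h := ιC_sq (inrm p q (eb r))
  rw [dotp_inr_inr, dotp_eb_eb, if_pos rfl] at h
  exact h

lemma ENEN (j k : Fin p) (r s : Fin q) :
    (Ee p q j * Nn p q r) * (Ee p q k * Nn p q s)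
      = -(Ee p q j * Ee p q k * (Nn p q r * Nn p q s)) := by
  rw [mul_assoc, ← mul_assoc (Nn p q r), NE_anti]
  noncomm_ring

lemma comm2 {ι : Type*} [Fintype ι] (u v w : ι → ℝ) :
    (ιC u * ιC v) * ιC w - ιC w * (ιC u * ιC v)
      = (2 * dotp u w) • ιC v - (2 * dotp v w) • ιC u := by
  have h1 : ιC v * ιC w = (-2 * dotp v w) • (1 : CliffordAlgebra (Qneg ι)) - ιC w * ιC v :=
    anticomm v w
  have h2 : ιC u * ιC w = (-2 * dotp u w) • (1 : CliffordAlgebra (Qneg ι)) - ιC w * ιC u :=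
    anticomm u w
  have key : (ιC u * ιC v) * ιC w
      = (-2 * dotp v w) • ιC u - (-2 * dotp u w) • ιC v + ιC w * (ιC u * ιC v) := by
    rw [mul_assoc, h1, mul_sub, mul_smul_comm, mul_one, ← mul_assoc, h2, sub_mul,
      smul_mul_assoc, one_mul, mul_assoc]
    abel
  rw [key]
  module


lemma Bcl_expand (B : (Fin p → ℝ) →ₗ[ℝ] (Fin p → ℝ) →ₗ[ℝ] (Fin q → ℝ)) (X : Fin p → ℝ) :
    Bcl p q B X = ∑ j, ∑ s, (B X (eb j)) s • (Ee p q j * Nn p q s) := by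
  unfold Bcl
  refine Finset.sum_congr rfl fun j _ => ?_
  have h : inrm p q (B X (eb j)) = ∑ s, (B X (eb j)) s • inrm p q (eb s) := by
    conv_lhs => rw [pi_expand (B X (eb j))]
    rw [map_sum]
    exact Finset.sum_congr rfl fun s _ => by rw [map_smul]
  rw [show ιC (inrm p q (B X (eb j))) = CliffordAlgebra.ι _ (inrm p q (B X (eb j))) from rfl, h,
    map_sum, Finset.mul_sum]
  exact Finset.sum_congr rfl fun s _ => by
    rw [map_smul, mul_smul_comm]; rfl

lemma sym4 {M : Type*} [AddCommGroup M] [Module ℝ M] {a b : Type*} [Fintype a] [Fintype b]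
    (f : a → a → b → b → M) :
    ∑ j, ∑ k, ∑ r, ∑ s, f j k r s
      = (2⁻¹ : ℝ) • ∑ j, ∑ k, ∑ r, ∑ s, (f j k r s + f k j s r) := by
  have hswap : ∑ j : a, ∑ k : a, ∑ r : b, ∑ s : b, f k j s r
      = ∑ j : a, ∑ k : a, ∑ r : b, ∑ s : b, f j k r s := by
    rw [Finset.sum_comm]
    exact Finset.sum_congr rfl fun j _ => Finset.sum_congr rfl fun k _ => Finset.sum_comm
  have hadd : ∑ j : a, ∑ k : a, ∑ r : b, ∑ s : b, (f j k r s + f k j s r)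
      = (∑ j : a, ∑ k : a, ∑ r : b, ∑ s : b, f j k r s)
        + ∑ j : a, ∑ k : a, ∑ r : b, ∑ s : b, f k j s r := by
    simp [Finset.sum_add_distrib]
  rw [hadd, hswap, ← two_smul ℝ, smul_smul]
  norm_num

lemma pair_sum {M : Type*} [AddCommGroup M] [Module ℝ M] {n : ℕ} (f : Fin n → Fin n → M)
    (hd : ∀ j, f j j = 0) (hs : ∀ j k, f k j = f j k) :
    ∑ j, ∑ k, f j k = (2 : ℝ) • ∑ j, ∑ k ∈ Finset.Ioi j, f j k := by
  have huniv : ∀ j, ∑ k, f j k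
      = ∑ k ∈ Finset.Ioi j, f j k + ∑ k ∈ Finset.Iio j, f j k := by
    intro j
    calc ∑ k, f j k = ∑ k ∈ ({j} : Finset (Fin n)), f j k + ∑ k ∈ ({j} : Finset (Fin n))ᶜ, f j k :=
          (Finset.sum_add_sum_compl _ _).symm
      _ = ∑ k ∈ ({j} : Finset (Fin n))ᶜ, f j k := by simp [hd]
      _ = ∑ k ∈ Finset.Ioi j, f j k + ∑ k ∈ Finset.Iio j, f j k := by
          have hset : ({j} : Finset (Fin n))ᶜ = Finset.Ioi j ∪ Finset.Iio j := by
            ext k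
            simp only [Finset.mem_compl, Finset.mem_singleton, Finset.mem_union,
              Finset.mem_Ioi, Finset.mem_Iio]
            omega
          rw [hset, Finset.sum_union (Finset.disjoint_Ioi_Iio j)]
  have hIio : ∑ j, ∑ k ∈ Finset.Iio j, f j k = ∑ j, ∑ k ∈ Finset.Ioi j, f j k := by
    rw [Finset.sum_sigma', Finset.sum_sigma']
    refine Finset.sum_nbij' (fun x => ⟨x.2, x.1⟩) (fun x => ⟨x.2, x.1⟩) ?_ ?_ ?_ ?_ ?_
    · intro x hx
      simp only [Finset.mem_sigma, Finset.mem_univ, Finset.mem_Iio, Finset.mem_Ioi, true_and] at hx ⊢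
      exact hx
    · intro x hx
      simp only [Finset.mem_sigma, Finset.mem_univ, Finset.mem_Iio, Finset.mem_Ioi, true_and] at hx ⊢
      exact hx
    · intro x _; rfl
    · intro x _; rfl
    · intro x _; exact hs x.2 x.1
  rw [Finset.sum_congr rfl fun j _ => huniv j, Finset.sum_add_distrib, hIio, two_smul]


section Core

variable {B : (Fin p → ℝ) →ₗ[ℝ] (Fin p → ℝ) →ₗ[ℝ] (Fin q → ℝ)}
  {Bstar : (Fin p → ℝ) →ₗ[ℝ] (Fin q → ℝ) →ₗ[ℝ] (Fin p → ℝ)}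

/-- coefficient of `e_j e_k`. -/
def βf (B : (Fin p → ℝ) →ₗ[ℝ] (Fin p → ℝ) →ₗ[ℝ] (Fin q → ℝ))
    (Bstar : (Fin p → ℝ) →ₗ[ℝ] (Fin q → ℝ) →ₗ[ℝ] (Fin p → ℝ))
    (X Y : Fin p → ℝ) (j k : Fin p) : ℝ :=
  dotp (Bstar X (B Y (eb j))) (eb k) - dotp (Bstar Y (B X (eb j))) (eb k)

/-- coefficient of `n_r n_s`. -/
def αf (B : (Fin p → ℝ) →ₗ[ℝ] (Fin p → ℝ) →ₗ[ℝ] (Fin q → ℝ))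
    (Bstar : (Fin p → ℝ) →ₗ[ℝ] (Fin q → ℝ) →ₗ[ℝ] (Fin p → ℝ))
    (X Y : Fin p → ℝ) (r s : Fin q) : ℝ :=
  dotp (B X (Bstar Y (eb r))) (eb s) - dotp (B Y (Bstar X (eb r))) (eb s)

variable (hadj : ∀ (x y : Fin p → ℝ) (n : Fin q → ℝ), dotp (B x y) n = dotp y (Bstar x n))

include hadj

lemma c_eq (x : Fin p → ℝ) (j : Fin p) (r : Fin q) :
    (B x (eb j)) r = (Bstar x (eb r)) j := by
  have h := hadj x (eb j) (eb r)
  rw [dotp_eb_right, dotp_comm, dotp_eb_right] at h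
  exact h

lemma sumA_r (j k : Fin p) :
    ∑ r, ((B Y (eb j)) r * (B X (eb k)) r - (B X (eb j)) r * (B Y (eb k)) r)
      = βf B Bstar X Y j k := by
  rw [Finset.sum_sub_distrib]
  have h1 : ∑ r, (B Y (eb j)) r * (B X (eb k)) r = dotp (Bstar X (B Y (eb j))) (eb k) := by
    have e : ∑ r, (B Y (eb j)) r * (B X (eb k)) r = dotp (B Y (eb j)) (B X (eb k)) := rfl
    rw [e, dotp_comm, hadj X (eb k) (B Y (eb j)), dotp_comm]
  have h2 : ∑ r, (B X (eb j)) r * (B Y (eb k)) r = dotp (Bstar Y (B X (eb j))) (eb k) := by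
    have e : ∑ r, (B X (eb j)) r * (B Y (eb k)) r = dotp (B X (eb j)) (B Y (eb k)) := rfl
    rw [e, dotp_comm, hadj Y (eb k) (B X (eb j)), dotp_comm]
  rw [h1, h2, βf]

lemma sumA_j (r s : Fin q) :
    ∑ j, ((B Y (eb j)) r * (B X (eb j)) s - (B X (eb j)) r * (B Y (eb j)) s)
      = αf B Bstar X Y r s := by
  rw [Finset.sum_sub_distrib]
  have h1 : ∑ j, (B Y (eb j)) r * (B X (eb j)) s = dotp (B X (Bstar Y (eb r))) (eb s) := by
    have e : ∀ j, (B Y (eb j)) r * (B X (eb j)) s = (Bstar Y (eb r)) j * (Bstar X (eb s)) j :=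
      fun j => by rw [c_eq hadj, c_eq hadj]
    rw [Finset.sum_congr rfl fun j _ => e j]
    exact (hadj X (Bstar Y (eb r)) (eb s)).symm
  have h2 : ∑ j, (B X (eb j)) r * (B Y (eb j)) s = dotp (B Y (Bstar X (eb r))) (eb s) := by
    have e : ∀ j, (B X (eb j)) r * (B Y (eb j)) s = (Bstar X (eb r)) j * (Bstar Y (eb s)) j :=
      fun j => by rw [c_eq hadj, c_eq hadj]
    rw [Finset.sum_congr rfl fun j _ => e j]
    exact (hadj Y (Bstar X (eb r)) (eb s)).symm
  rw [h1, h2, αf]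

lemma βf_anti (j k : Fin p) : βf B Bstar X Y k j = - βf B Bstar X Y j k := by
  unfold βf
  have h1 : dotp (Bstar X (B Y (eb k))) (eb j) = dotp (Bstar Y (B X (eb j))) (eb k) := by
    rw [dotp_comm, ← hadj X (eb j) (B Y (eb k)), dotp_comm, hadj Y (eb k) (B X (eb j)),
      dotp_comm]
  have h2 : dotp (Bstar Y (B X (eb k))) (eb j) = dotp (Bstar X (B Y (eb j))) (eb k) := by
    rw [dotp_comm, ← hadj Y (eb j) (B X (eb k)), dotp_comm, hadj X (eb k) (B Y (eb j)),
      dotp_comm]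
  rw [h1, h2]; ring

lemma αf_anti (r s : Fin q) : αf B Bstar X Y s r = - αf B Bstar X Y r s := by
  unfold αf
  have h1 : dotp (B X (Bstar Y (eb s))) (eb r) = dotp (B Y (Bstar X (eb r))) (eb s) := by
    rw [hadj X (Bstar Y (eb s)) (eb r), dotp_comm, ← hadj Y (Bstar X (eb r)) (eb s)]
  have h2 : dotp (B Y (Bstar X (eb s))) (eb r) = dotp (B X (Bstar Y (eb r))) (eb s) := by
    rw [hadj Y (Bstar X (eb s)) (eb r), dotp_comm, ← hadj X (Bstar Y (eb r)) (eb s)]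
  rw [h1, h2]; ring

lemma core :
    Bcl p q B Y * Bcl p q B X - Bcl p q B X * Bcl p q B Y
      = ∑ j, ∑ k, βf B Bstar X Y j k • (Ee p q j * Ee p q k)
        + ∑ r, ∑ s, αf B Bstar X Y r s • (Nn p q r * Nn p q s) := by
  have hprod : ∀ U V : Fin p → ℝ, Bcl p q B U * Bcl p q B V
      = ∑ j, ∑ k, ∑ r, ∑ s, ((B U (eb j)) r * (B V (eb k)) s) •
          (-(Ee p q j * Ee p q k * (Nn p q r * Nn p q s))) := by
    intro U V
    rw [Bcl_expand, Bcl_expand, Finset.sum_mul]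
    refine Finset.sum_congr rfl fun j _ => ?_
    have lhs_eq : (∑ r, (B U (eb j)) r • (Ee p q j * Nn p q r))
          * (∑ k, ∑ s, (B V (eb k)) s • (Ee p q k * Nn p q s))
        = ∑ r, ∑ k, ∑ s, ((B U (eb j)) r * (B V (eb k)) s) •
            (-(Ee p q j * Ee p q k * (Nn p q r * Nn p q s))) := by
      rw [Finset.sum_mul]
      refine Finset.sum_congr rfl fun r _ => ?_
      rw [Finset.mul_sum]
      refine Finset.sum_congr rfl fun k _ => ?_
      rw [Finset.mul_sum]
      refine Finset.sum_congr rfl fun s _ => ?_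
      rw [smul_mul_assoc, mul_smul_comm, smul_smul, ENEN]
    rw [lhs_eq, Finset.sum_comm]
  have hD : Bcl p q B Y * Bcl p q B X - Bcl p q B X * Bcl p q B Y
      = ∑ j, ∑ k, ∑ r, ∑ s,
          ((B Y (eb j)) r * (B X (eb k)) s - (B X (eb j)) r * (B Y (eb k)) s) •
            (-(Ee p q j * Ee p q k * (Nn p q r * Nn p q s))) := by
    rw [hprod Y X, hprod X Y]
    simp only [← Finset.sum_sub_distrib, ← sub_smul]
  have hpt : ∀ (j k : Fin p) (r s : Fin q),
      ((B Y (eb j)) r * (B X (eb k)) s - (B X (eb j)) r * (B Y (eb k)) s) •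
          (-(Ee p q j * Ee p q k * (Nn p q r * Nn p q s)))
        + ((B Y (eb k)) s * (B X (eb j)) r - (B X (eb k)) s * (B Y (eb j)) r) •
          (-(Ee p q k * Ee p q j * (Nn p q s * Nn p q r)))
      = (2 * if r = s then
            (B Y (eb j)) r * (B X (eb k)) s - (B X (eb j)) r * (B Y (eb k)) s else 0) •
          (Ee p q j * Ee p q k)
        + (2 * if j = k then
            (B Y (eb j)) r * (B X (eb k)) s - (B X (eb j)) r * (B Y (eb k)) s else 0) •
          (Nn p q r * Nn p q s) := by
    intro j k r s
    rcases eq_or_ne j k with hjk | hjk <;> rcases eq_or_ne r s with hrs | hrs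
    · subst hjk; subst hrs
      simp only [eq_self_iff_true, if_true]
      module
    · subst hjk
      simp only [eq_self_iff_true, if_true, if_neg hrs]
      rw [Ee_sq, Nn_anti_ne hrs]
      simp only [smul_mul_assoc, one_mul, mul_neg, neg_neg, mul_zero]
      module
    · subst hrs
      simp only [if_neg hjk, eq_self_iff_true, if_true]
      rw [Nn_sq, Ee_anti_ne hjk]
      simp only [mul_smul_comm, mul_one, neg_mul, mul_neg, neg_neg, mul_zero]
      module
    · simp only [if_neg hjk, if_neg hrs]
      rw [Ee_anti_ne hjk, Nn_anti_ne hrs]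
      simp only [neg_mul, mul_neg, neg_neg, mul_zero]
      module
  rw [hD, sym4]
  rw [Finset.sum_congr rfl fun j _ => Finset.sum_congr rfl fun k _ =>
    Finset.sum_congr rfl fun r _ => Finset.sum_congr rfl fun s _ => hpt j k r s]
  have hsplit : ∑ j, ∑ k, ∑ r : Fin q, ∑ s : Fin q,
      ((2 * if r = s then
          (B Y (eb j)) r * (B X (eb k)) s - (B X (eb j)) r * (B Y (eb k)) s else 0) •
        (Ee p q j * Ee p q k)
       + (2 * if j = k then
          (B Y (eb j)) r * (B X (eb k)) s - (B X (eb j)) r * (B Y (eb k)) s else 0) •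
        (Nn p q r * Nn p q s))
      = (∑ j, ∑ k, ∑ r : Fin q, ∑ s : Fin q,
          (2 * if r = s then
            (B Y (eb j)) r * (B X (eb k)) s - (B X (eb j)) r * (B Y (eb k)) s else 0) •
          (Ee p q j * Ee p q k))
        + ∑ j, ∑ k, ∑ r : Fin q, ∑ s : Fin q,
          (2 * if j = k then
            (B Y (eb j)) r * (B X (eb k)) s - (B X (eb j)) r * (B Y (eb k)) s else 0) •
          (Nn p q r * Nn p q s) := by
    simp [Finset.sum_add_distrib]
  have hE : ∑ j, ∑ k, ∑ r : Fin q, ∑ s : Fin q,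
        (2 * if r = s then
          (B Y (eb j)) r * (B X (eb k)) s - (B X (eb j)) r * (B Y (eb k)) s else 0) •
        (Ee p q j * Ee p q k)
      = (2 : ℝ) • ∑ j, ∑ k, βf B Bstar X Y j k • (Ee p q j * Ee p q k) := by
    have h1 : ∀ j k : Fin p, ∑ r : Fin q, ∑ s : Fin q,
        (2 * if r = s then
          (B Y (eb j)) r * (B X (eb k)) s - (B X (eb j)) r * (B Y (eb k)) s else 0) •
        (Ee p q j * Ee p q k)
        = (2 * βf B Bstar X Y j k) • (Ee p q j * Ee p q k) := by
      intro j k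
      simp only [mul_ite, mul_zero, ite_smul, zero_smul, Finset.sum_ite_eq,
        Finset.mem_univ, if_true]
      rw [← Finset.sum_smul, ← Finset.mul_sum, sumA_r hadj]
    rw [Finset.sum_congr rfl fun j _ => Finset.sum_congr rfl fun k _ => h1 j k]
    simp only [mul_smul, Finset.smul_sum]
  have hN : ∑ j, ∑ k, ∑ r : Fin q, ∑ s : Fin q,
        (2 * if j = k then
          (B Y (eb j)) r * (B X (eb k)) s - (B X (eb j)) r * (B Y (eb k)) s else 0) •
        (Nn p q r * Nn p q s)
      = (2 : ℝ) • ∑ r, ∑ s, αf B Bstar X Y r s • (Nn p q r * Nn p q s) := by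
    have h1 : ∀ j : Fin p, ∑ k : Fin p, ∑ r : Fin q, ∑ s : Fin q,
        (2 * if j = k then
          (B Y (eb j)) r * (B X (eb k)) s - (B X (eb j)) r * (B Y (eb k)) s else 0) •
        (Nn p q r * Nn p q s)
        = ∑ r : Fin q, ∑ s : Fin q,
            (2 * ((B Y (eb j)) r * (B X (eb j)) s - (B X (eb j)) r * (B Y (eb j)) s)) •
            (Nn p q r * Nn p q s) := by
      intro j
      have h2 : ∀ k : Fin p, ∑ r : Fin q, ∑ s : Fin q,
          (2 * if j = k then
            (B Y (eb j)) r * (B X (eb k)) s - (B X (eb j)) r * (B Y (eb k)) s else 0) •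
          (Nn p q r * Nn p q s)
          = if j = k then ∑ r : Fin q, ∑ s : Fin q,
              (2 * ((B Y (eb j)) r * (B X (eb k)) s - (B X (eb j)) r * (B Y (eb k)) s)) •
              (Nn p q r * Nn p q s) else 0 := by
        intro k; split <;> simp
      rw [Finset.sum_congr rfl fun k _ => h2 k, Finset.sum_ite_eq, if_pos (Finset.mem_univ j)]
    rw [Finset.sum_congr rfl fun j _ => h1 j, Finset.sum_comm,
      Finset.sum_congr rfl fun r _ => Finset.sum_comm]
    have h3 : ∀ (r s : Fin q), ∑ j : Fin p,
        (2 * ((B Y (eb j)) r * (B X (eb j)) s - (B X (eb j)) r * (B Y (eb j)) s)) •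
          (Nn p q r * Nn p q s)
        = (2 : ℝ) • (αf B Bstar X Y r s • (Nn p q r * Nn p q s)) := by
      intro r s
      rw [← Finset.sum_smul, ← Finset.mul_sum, sumA_j hadj, mul_smul]
    rw [Finset.sum_congr rfl fun r _ => Finset.sum_congr rfl fun s _ => h3 r s]
    simp only [← Finset.smul_sum]
  rw [hsplit, hE, hN, smul_add, smul_smul, smul_smul]
  norm_num

end Core


lemma dotp_add_right {ι : Type*} [Fintype ι] (x y z : ι → ℝ) :
    dotp x (y + z) = dotp x y + dotp x z := by
  simp [dotp, mul_add, Finset.sum_add_distrib]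

lemma dotp_eb_left {ι : Type*} [Fintype ι] [DecidableEq ι] (x : ι → ℝ) (i : ι) :
    dotp (eb i) x = x i := by
  rw [dotp_comm, dotp_eb_right]

section Parts

variable {B : (Fin p → ℝ) →ₗ[ℝ] (Fin p → ℝ) →ₗ[ℝ] (Fin q → ℝ)}
  {Bstar : (Fin p → ℝ) →ₗ[ℝ] (Fin q → ℝ) →ₗ[ℝ] (Fin p → ℝ)}
  (hadj : ∀ (x y : Fin p → ℝ) (n : Fin q → ℝ), dotp (B x y) n = dotp y (Bstar x n))
  (X Y : Fin p → ℝ)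

include hadj

lemma βf_diag (j : Fin p) : βf B Bstar X Y j j = 0 := by
  have h := βf_anti hadj (X := X) (Y := Y) j j
  linarith

lemma αf_diag (r : Fin q) : αf B Bstar X Y r r = 0 := by
  have h := αf_anti hadj (X := X) (Y := Y) r r
  linarith

lemma part1 :
    (1 / 4 : ℝ) • (Bcl p q B Y * Bcl p q B X - Bcl p q B X * Bcl p q B Y)
      = (1 / 2 : ℝ) • (∑ j : Fin p, ∑ k ∈ Finset.Ioi j,
          (dotp (Bstar X (B Y (eb j))) (eb k) - dotp (Bstar Y (B X (eb j))) (eb k)) •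
            (ιC (inlm p q (eb j)) * ιC (inlm p q (eb k))))
        + (1 / 2 : ℝ) • (∑ r : Fin q, ∑ s ∈ Finset.Ioi r,
          (dotp (B X (Bstar Y (eb r))) (eb s) - dotp (B Y (Bstar X (eb r))) (eb s)) •
            (ιC (inrm p q (eb r)) * ιC (inrm p q (eb s)))) := by
  have hEe : ∀ j : Fin p, ιC (inlm p q (eb j)) = Ee p q j := fun _ => rfl
  have hNn : ∀ r : Fin q, ιC (inrm p q (eb r)) = Nn p q r := fun _ => rfl
  simp only [hEe, hNn]
  rw [core hadj]
  have hd1 : ∀ j : Fin p, βf B Bstar X Y j j • (Ee p q j * Ee p q j) = 0 := by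
    intro j; rw [βf_diag hadj, zero_smul]
  have hs1 : ∀ j k : Fin p,
      βf B Bstar X Y k j • (Ee p q k * Ee p q j) = βf B Bstar X Y j k • (Ee p q j * Ee p q k) := by
    intro j k
    rcases eq_or_ne j k with h | h
    · subst h; rfl
    · rw [βf_anti hadj, Ee_anti_ne h]; simp
  have hd2 : ∀ r : Fin q, αf B Bstar X Y r r • (Nn p q r * Nn p q r) = 0 := by
    intro r; rw [αf_diag hadj, zero_smul]
  have hs2 : ∀ r s : Fin q,
      αf B Bstar X Y s r • (Nn p q s * Nn p q r) = αf B Bstar X Y r s • (Nn p q r * Nn p q s) := by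
    intro r s
    rcases eq_or_ne r s with h | h
    · subst h; rfl
    · rw [αf_anti hadj, Nn_anti_ne h]; simp
  rw [pair_sum _ hd1 hs1, pair_sum _ hd2 hs2]
  simp only [βf, αf]
  rw [smul_add, smul_smul, smul_smul]
  norm_num

lemma part2 (Zp : Fin p → ℝ) (Zq : Fin q → ℝ) :
    ((1 / 4 : ℝ) • (Bcl p q B Y * Bcl p q B X - Bcl p q B X * Bcl p q B Y))
        * ιC (inlm p q Zp + inrm p q Zq)
      - ιC (inlm p q Zp + inrm p q Zq)
        * ((1 / 4 : ℝ) • (Bcl p q B Y * Bcl p q B X - Bcl p q B X * Bcl p q B Y))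
    = ιC (inlm p q (Bstar X (B Y Zp)) - inlm p q (Bstar Y (B X Zp))
        + inrm p q (B X (Bstar Y Zq)) - inrm p q (B Y (Bstar X Zq))) := by
  set w : (Fin p ⊕ Fin q) → ℝ := inlm p q Zp + inrm p q Zq with hw
  -- step 0 : pull the scalar out
  rw [smul_mul_assoc, mul_smul_comm, ← smul_sub]
  -- step 1 : commutator of the canonical form
  have hcomm : (Bcl p q B Y * Bcl p q B X - Bcl p q B X * Bcl p q B Y) * ιC w
      - ιC w * (Bcl p q B Y * Bcl p q B X - Bcl p q B X * Bcl p q B Y)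
      = ∑ j, ∑ k, βf B Bstar X Y j k •
          ((Ee p q j * Ee p q k) * ιC w - ιC w * (Ee p q j * Ee p q k))
        + ∑ r, ∑ s, αf B Bstar X Y r s •
          ((Nn p q r * Nn p q s) * ιC w - ιC w * (Nn p q r * Nn p q s)) := by
    rw [core hadj]
    have hsplit : ∀ a b c : CliffordAlgebra (Qneg (Fin p ⊕ Fin q)),
        (a + b) * c - c * (a + b) = (a * c - c * a) + (b * c - c * b) := by
      intro a b c; noncomm_ring
    rw [hsplit]
    congr 1
    · rw [Finset.sum_mul, Finset.mul_sum, ← Finset.sum_sub_distrib]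
      refine Finset.sum_congr rfl fun j _ => ?_
      rw [Finset.sum_mul, Finset.mul_sum, ← Finset.sum_sub_distrib]
      refine Finset.sum_congr rfl fun k _ => ?_
      rw [smul_mul_assoc, mul_smul_comm, ← smul_sub]
    · rw [Finset.sum_mul, Finset.mul_sum, ← Finset.sum_sub_distrib]
      refine Finset.sum_congr rfl fun r _ => ?_
      rw [Finset.sum_mul, Finset.mul_sum, ← Finset.sum_sub_distrib]
      refine Finset.sum_congr rfl fun s _ => ?_
      rw [smul_mul_assoc, mul_smul_comm, ← smul_sub]
  -- step 2 : basic commutators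
  have hc1 : ∀ j k : Fin p, (Ee p q j * Ee p q k) * ιC w - ιC w * (Ee p q j * Ee p q k)
      = (2 * Zp j) • Ee p q k - (2 * Zp k) • Ee p q j := by
    intro j k
    have h := comm2 (inlm p q (eb j)) (inlm p q (eb k)) w
    simp only [hw, dotp_add_right, dotp_inl_inl, dotp_inl_inr, dotp_eb_left,
      add_zero] at h
    exact h
  have hc2 : ∀ r s : Fin q, (Nn p q r * Nn p q s) * ιC w - ιC w * (Nn p q r * Nn p q s)
      = (2 * Zq r) • Nn p q s - (2 * Zq s) • Nn p q r := by
    intro r s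
    have h := comm2 (inrm p q (eb r)) (inrm p q (eb s)) w
    simp only [hw, dotp_add_right, dotp_inr_inr, dotp_inr_inl, dotp_eb_left,
      zero_add] at h
    exact h
  have hrw1 : ∑ j, ∑ k, βf B Bstar X Y j k •
        ((Ee p q j * Ee p q k) * ιC w - ιC w * (Ee p q j * Ee p q k))
      = ∑ j, ∑ k, βf B Bstar X Y j k • ((2 * Zp j) • Ee p q k - (2 * Zp k) • Ee p q j) :=
    Finset.sum_congr rfl fun j _ => Finset.sum_congr rfl fun k _ => by rw [hc1 j k]
  have hrw2 : ∑ r, ∑ s, αf B Bstar X Y r s •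
        ((Nn p q r * Nn p q s) * ιC w - ιC w * (Nn p q r * Nn p q s))
      = ∑ r, ∑ s, αf B Bstar X Y r s • ((2 * Zq r) • Nn p q s - (2 * Zq s) • Nn p q r) :=
    Finset.sum_congr rfl fun r _ => Finset.sum_congr rfl fun s _ => by rw [hc2 r s]
  rw [hcomm, hrw1, hrw2]
  -- step 3 : fold the two halves together
  have hsum1 : ∑ j, ∑ k, βf B Bstar X Y j k • ((2 * Zp j) • Ee p q k - (2 * Zp k) • Ee p q j)
      = (4 : ℝ) • ∑ j, ∑ k, (βf B Bstar X Y j k * Zp j) • Ee p q k := by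
    have expand : ∀ j k : Fin p,
        βf B Bstar X Y j k • ((2 * Zp j) • Ee p q k - (2 * Zp k) • Ee p q j)
        = (2 * (βf B Bstar X Y j k * Zp j)) • Ee p q k
          - (2 * (βf B Bstar X Y j k * Zp k)) • Ee p q j := by
      intro j k; module
    rw [Finset.sum_congr rfl fun j _ => Finset.sum_congr rfl fun k _ => expand j k]
    simp only [Finset.sum_sub_distrib]
    have hswap : ∑ j, ∑ k, (2 * (βf B Bstar X Y j k * Zp k)) • Ee p q j
        = ∑ j, ∑ k, (-(2 * (βf B Bstar X Y j k * Zp j))) • Ee p q k := by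
      rw [Finset.sum_comm]
      refine Finset.sum_congr rfl fun j _ => Finset.sum_congr rfl fun k _ => ?_
      rw [βf_anti hadj]
      module
    rw [hswap]
    simp only [neg_smul, Finset.sum_neg_distrib, sub_neg_eq_add, mul_smul]
    simp only [← Finset.smul_sum]
    rw [← add_smul]
    norm_num
  have hsum2 : ∑ r, ∑ s, αf B Bstar X Y r s • ((2 * Zq r) • Nn p q s - (2 * Zq s) • Nn p q r)
      = (4 : ℝ) • ∑ r, ∑ s, (αf B Bstar X Y r s * Zq r) • Nn p q s := by
    have expand : ∀ r s : Fin q,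
        αf B Bstar X Y r s • ((2 * Zq r) • Nn p q s - (2 * Zq s) • Nn p q r)
        = (2 * (αf B Bstar X Y r s * Zq r)) • Nn p q s
          - (2 * (αf B Bstar X Y r s * Zq s)) • Nn p q r := by
      intro r s; module
    rw [Finset.sum_congr rfl fun r _ => Finset.sum_congr rfl fun s _ => expand r s]
    simp only [Finset.sum_sub_distrib]
    have hswap : ∑ r, ∑ s, (2 * (αf B Bstar X Y r s * Zq s)) • Nn p q r
        = ∑ r, ∑ s, (-(2 * (αf B Bstar X Y r s * Zq r))) • Nn p q s := by
      rw [Finset.sum_comm]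
      refine Finset.sum_congr rfl fun r _ => Finset.sum_congr rfl fun s _ => ?_
      rw [αf_anti hadj]
      module
    rw [hswap]
    simp only [neg_smul, Finset.sum_neg_distrib, sub_neg_eq_add, mul_smul]
    simp only [← Finset.smul_sum]
    rw [← add_smul]
    norm_num
  rw [hsum1, hsum2, smul_add, smul_smul, smul_smul]
  norm_num
  -- step 4 : identify the two sums with vectors
  have hT1 : ∑ j, ∑ k, (βf B Bstar X Y j k * Zp j) • Ee p q k
      = ιC (inlm p q (Bstar X (B Y Zp)) - inlm p q (Bstar Y (B X Zp))) := by
    rw [Finset.sum_comm]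
    have e1 : Bstar X (B Y Zp) = ∑ j, Zp j • Bstar X (B Y (eb j)) := by
      conv_lhs => rw [pi_expand Zp]
      simp only [map_sum, map_smul]
    have e2 : Bstar Y (B X Zp) = ∑ j, Zp j • Bstar Y (B X (eb j)) := by
      conv_lhs => rw [pi_expand Zp]
      simp only [map_sum, map_smul]
    have hcol : ∀ k : Fin p, ∑ j, (βf B Bstar X Y j k * Zp j) • Ee p q k
        = ((Bstar X (B Y Zp)) k - (Bstar Y (B X Zp)) k) • Ee p q k := by
      intro k
      rw [← Finset.sum_smul]
      congr 1
      have e1k : (Bstar X (B Y Zp)) k = ∑ j, Zp j * (Bstar X (B Y (eb j))) k := by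
        rw [e1, Finset.sum_apply]
        exact Finset.sum_congr rfl fun j _ => by simp
      have e2k : (Bstar Y (B X Zp)) k = ∑ j, Zp j * (Bstar Y (B X (eb j))) k := by
        rw [e2, Finset.sum_apply]
        exact Finset.sum_congr rfl fun j _ => by simp
      rw [e1k, e2k, ← Finset.sum_sub_distrib]
      refine Finset.sum_congr rfl fun j _ => ?_
      rw [βf, dotp_eb_right, dotp_eb_right]
      ring
    rw [Finset.sum_congr rfl fun k _ => hcol k]
    have hv : Bstar X (B Y Zp) - Bstar Y (B X Zp)
        = ∑ k, ((Bstar X (B Y Zp)) k - (Bstar Y (B X Zp)) k) • eb k := by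
      conv_lhs => rw [pi_expand (Bstar X (B Y Zp) - Bstar Y (B X Zp))]
      exact Finset.sum_congr rfl fun k _ => by simp
    rw [← map_sub, hv, map_sum]
    simp only [map_smul]
    show (∑ k, ((Bstar X (B Y Zp)) k - (Bstar Y (B X Zp)) k) • Ee p q k)
      = CliffordAlgebra.ι _ (∑ k, ((Bstar X (B Y Zp)) k - (Bstar Y (B X Zp)) k) • inlm p q (eb k))
    rw [map_sum]
    exact Finset.sum_congr rfl fun k _ => by rw [map_smul]; rfl
  have hT2 : ∑ r, ∑ s, (αf B Bstar X Y r s * Zq r) • Nn p q s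
      = ιC (inrm p q (B X (Bstar Y Zq)) - inrm p q (B Y (Bstar X Zq))) := by
    rw [Finset.sum_comm]
    have e1 : B X (Bstar Y Zq) = ∑ r, Zq r • B X (Bstar Y (eb r)) := by
      conv_lhs => rw [pi_expand Zq]
      simp only [map_sum, map_smul]
    have e2 : B Y (Bstar X Zq) = ∑ r, Zq r • B Y (Bstar X (eb r)) := by
      conv_lhs => rw [pi_expand Zq]
      simp only [map_sum, map_smul]
    have hcol : ∀ s : Fin q, ∑ r, (αf B Bstar X Y r s * Zq r) • Nn p q s
        = ((B X (Bstar Y Zq)) s - (B Y (Bstar X Zq)) s) • Nn p q s := by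
      intro s
      rw [← Finset.sum_smul]
      congr 1
      have e1k : (B X (Bstar Y Zq)) s = ∑ r, Zq r * (B X (Bstar Y (eb r))) s := by
        rw [e1, Finset.sum_apply]
        exact Finset.sum_congr rfl fun r _ => by simp
      have e2k : (B Y (Bstar X Zq)) s = ∑ r, Zq r * (B Y (Bstar X (eb r))) s := by
        rw [e2, Finset.sum_apply]
        exact Finset.sum_congr rfl fun r _ => by simp
      rw [e1k, e2k, ← Finset.sum_sub_distrib]
      refine Finset.sum_congr rfl fun r _ => ?_
      rw [αf, dotp_eb_right, dotp_eb_right]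
      ring
    rw [Finset.sum_congr rfl fun s _ => hcol s]
    have hv : B X (Bstar Y Zq) - B Y (Bstar X Zq)
        = ∑ s, ((B X (Bstar Y Zq)) s - (B Y (Bstar X Zq)) s) • eb s := by
      conv_lhs => rw [pi_expand (B X (Bstar Y Zq) - B Y (Bstar X Zq))]
      exact Finset.sum_congr rfl fun s _ => by simp
    rw [← map_sub, hv, map_sum]
    simp only [map_smul]
    show (∑ s, ((B X (Bstar Y Zq)) s - (B Y (Bstar X Zq)) s) • Nn p q s)
      = CliffordAlgebra.ι _ (∑ s, ((B X (Bstar Y Zq)) s - (B Y (Bstar X Zq)) s) • inrm p q (eb s))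
    rw [map_sum]
    exact Finset.sum_congr rfl fun s _ => by rw [map_smul]; rfl
  rw [hT1, hT2]
  have hvec : inlm p q (Bstar X (B Y Zp)) - inlm p q (Bstar Y (B X Zp))
      + inrm p q (B X (Bstar Y Zq)) - inrm p q (B Y (Bstar X Zq))
      = (inlm p q (Bstar X (B Y Zp)) - inlm p q (Bstar Y (B X Zp)))
        + (inrm p q (B X (Bstar Y Zq)) - inrm p q (B Y (Bstar X Zq))) := by
    abel
  rw [hvec]
  show ιC _ + ιC _ = ιC _
  rw [ιC, ιC, ιC, map_add]

end Parts

end Aux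


/-- Let `B : ℝ^p × ℝ^p → ℝ^q` be a symmetric bilinear map with partial adjoint
`B* : ℝ^p × ℝ^q → ℝ^p` (so `⟨B(x,y), n⟩ = ⟨y, B*(x,n)⟩`), and for `X ∈ ℝ^p` let
`B(X) := Σ_{j=1}^p e_j · B(X, e_j) ∈ Cl(N)`.  Then for all `X, Y ∈ ℝ^p`:
`(1/4)(B(Y)·B(X) − B(X)·B(Y))
  = (1/2)·Σ_{j<k} (⟨B*(X,B(Y,e_j)),e_k⟩ − ⟨B*(Y,B(X,e_j)),e_k⟩) e_j·e_k
  + (1/2)·Σ_{r<s} (⟨B(X,B*(Y,n_r)),n_s⟩ − ⟨B(Y,B*(X,n_r)),n_s⟩) n_r·n_s`,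
and for every `Z = Z_p + Z_q ∈ ℝ^p ⊕ ℝ^q`,
`[(1/4)(B(Y)·B(X) − B(X)·B(Y)), Z]
  = B*(X,B(Y,Z_p)) − B*(Y,B(X,Z_p)) + B(X,B*(Y,Z_q)) − B(Y,B*(X,Z_q))`. -/
theorem stmt4 (p q : ℕ)
    (B : (Fin p → ℝ) →ₗ[ℝ] (Fin p → ℝ) →ₗ[ℝ] (Fin q → ℝ))
    (Bstar : (Fin p → ℝ) →ₗ[ℝ] (Fin q → ℝ) →ₗ[ℝ] (Fin p → ℝ))
    (hsymm : ∀ x y : Fin p → ℝ, B x y = B y x)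
    (hadj : ∀ (x y : Fin p → ℝ) (n : Fin q → ℝ), dotp (B x y) n = dotp y (Bstar x n)) :
    (∀ X Y : Fin p → ℝ,
      (1 / 4 : ℝ) • (Bcl p q B Y * Bcl p q B X - Bcl p q B X * Bcl p q B Y)
        = (1 / 2 : ℝ) • (∑ j : Fin p, ∑ k ∈ Finset.Ioi j,
            (dotp (Bstar X (B Y (eb j))) (eb k) - dotp (Bstar Y (B X (eb j))) (eb k)) •
              (ιC (inlm p q (eb j)) * ιC (inlm p q (eb k))))
          + (1 / 2 : ℝ) • (∑ r : Fin q, ∑ s ∈ Finset.Ioi r,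
            (dotp (B X (Bstar Y (eb r))) (eb s) - dotp (B Y (Bstar X (eb r))) (eb s)) •
              (ιC (inrm p q (eb r)) * ιC (inrm p q (eb s))))) ∧
    (∀ (X Y Zp : Fin p → ℝ) (Zq : Fin q → ℝ),
      ((1 / 4 : ℝ) • (Bcl p q B Y * Bcl p q B X - Bcl p q B X * Bcl p q B Y))
          * ιC (inlm p q Zp + inrm p q Zq)
        - ιC (inlm p q Zp + inrm p q Zq)
          * ((1 / 4 : ℝ) • (Bcl p q B Y * Bcl p q B X - Bcl p q B X * Bcl p q B Y))
      = ιC (inlm p q (Bstar X (B Y Zp)) - inlm p q (Bstar Y (B X Zp))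
          + inrm p q (B X (Bstar Y Zq)) - inrm p q (B Y (Bstar X Zq)))) := by
  constructor
  · intro X Y
    exact Aux.part1 hadj X Y
  · intro X Y Zp Zq
    exact Aux.part2 hadj X Y Zp Zq
end
end

section
/- Let g ∈ ℍ^ℂ satisfy g·ḡ = 1. Then for every x = (x₀,x₁,x₂,x₃) ∈ ℝ⁴ there exists y = (y₀,y₁,y₂,y₃) ∈ ℝ⁴ such that ḡ·X(x)·ĝ = X(y), where X(x) := i·x₀·1 + x₁·I + x₂·J + x₃·(JI), and moreover y₀² − y₁² − y₂² − y₃² = x₀² − x₁² − x₂² − x₃². (In other words, the twisted conjugation X ↦ ḡ·X·ĝ by a unit complex quaternion preserves the real form {i·x₀ + x₁I + x₂J + x₃JI : x ∈ ℝ⁴} of the Minkowski space ℝ^{1,3} together with its quadratic form.) -/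
/-!
`ℍ^ℂ` is modelled as `Quaternion ℂ` (complex coefficients on `1, I, J, K`, central complex
unit `i = Complex.I`, `I² = J² = K² = −1`, `I*J = K = −J*I`).  `qbar` is the quaternionic
conjugate `ā = a₀ − a₁I − a₂J − a₃K` and `qhat` the coefficientwise complex conjugate `â`.
-/

noncomputable section

/-- The quaternionic conjugate `ā := a₀ − a₁I − a₂J − a₃K`. -/
def qbar (a : Quaternion ℂ) : Quaternion ℂ := ⟨a.re, -a.imI, -a.imJ, -a.imK⟩

/-- Coefficientwise complex conjugation `â` on the complex quaternions. -/
def qhat (a : Quaternion ℂ) : Quaternion ℂ :=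
  ⟨starRingEnd ℂ a.re, starRingEnd ℂ a.imI, starRingEnd ℂ a.imJ, starRingEnd ℂ a.imK⟩

/-- The complex quaternion `X(x) := i·x₀·1 + x₁·I + x₂·J + x₃·(JI)` (note `JI = −K`). -/
def Xq (x : Fin 4 → ℝ) : Quaternion ℂ :=
  ⟨Complex.I * (x 0 : ℂ), ((x 1 : ℝ) : ℂ), ((x 2 : ℝ) : ℂ), -((x 3 : ℝ) : ℂ)⟩

lemma qbar_eq_star (a : Quaternion ℂ) : qbar a = star a := by ext <;> simp [qbar]

@[simp] lemma qhat_re (a : Quaternion ℂ) : (qhat a).re = starRingEnd ℂ a.re := rfl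
@[simp] lemma qhat_imI (a : Quaternion ℂ) : (qhat a).imI = starRingEnd ℂ a.imI := rfl
@[simp] lemma qhat_imJ (a : Quaternion ℂ) : (qhat a).imJ = starRingEnd ℂ a.imJ := rfl
@[simp] lemma qhat_imK (a : Quaternion ℂ) : (qhat a).imK = starRingEnd ℂ a.imK := rfl
@[simp] lemma qbar_re (a : Quaternion ℂ) : (qbar a).re = a.re := rfl
@[simp] lemma qbar_imI (a : Quaternion ℂ) : (qbar a).imI = -a.imI := rfl
@[simp] lemma qbar_imJ (a : Quaternion ℂ) : (qbar a).imJ = -a.imJ := rfl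
@[simp] lemma qbar_imK (a : Quaternion ℂ) : (qbar a).imK = -a.imK := rfl

lemma qhat_mul (a b : Quaternion ℂ) : qhat (a * b) = qhat a * qhat b := by
  ext <;>
    simp [Quaternion.re_mul, Quaternion.imI_mul, Quaternion.imJ_mul,
      Quaternion.imK_mul, map_add, map_sub, map_mul]

lemma qhat_qhat (a : Quaternion ℂ) : qhat (qhat a) = a := by
  ext <;> simp [qhat]

lemma qhat_qbar (a : Quaternion ℂ) : qhat (qbar a) = qbar (qhat a) := by
  ext <;> simp [qhat, qbar]

lemma qhat_one : qhat 1 = 1 := by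
  ext <;> simp [Quaternion.re_one, Quaternion.imI_one, Quaternion.imJ_one, Quaternion.imK_one]

lemma normSq_qhat (a : Quaternion ℂ) :
    Quaternion.normSq (qhat a) = starRingEnd ℂ (Quaternion.normSq a) := by
  simp [Quaternion.normSq_def', map_add, map_pow]

@[simp] lemma Xq_re (x : Fin 4 → ℝ) : (Xq x).re = Complex.I * (x 0 : ℂ) := rfl
@[simp] lemma Xq_imI (x : Fin 4 → ℝ) : (Xq x).imI = ((x 1 : ℝ) : ℂ) := rfl
@[simp] lemma Xq_imJ (x : Fin 4 → ℝ) : (Xq x).imJ = ((x 2 : ℝ) : ℂ) := rfl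
@[simp] lemma Xq_imK (x : Fin 4 → ℝ) : (Xq x).imK = -((x 3 : ℝ) : ℂ) := rfl

lemma qhat_Xq (x : Fin 4 → ℝ) : qhat (Xq x) = - qbar (Xq x) := by
  ext
  · show starRingEnd ℂ (Complex.I * (x 0 : ℂ)) = -(Complex.I * (x 0 : ℂ)); simp
  · show starRingEnd ℂ ((x 1 : ℝ) : ℂ) = -(-((x 1 : ℝ) : ℂ)); simp
  · show starRingEnd ℂ ((x 2 : ℝ) : ℂ) = -(-((x 2 : ℝ) : ℂ)); simp
  · show starRingEnd ℂ (-((x 3 : ℝ) : ℂ)) = -(-(-((x 3 : ℝ) : ℂ))); simp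

/-- If `g ∈ ℍ^ℂ` satisfies `g·ḡ = 1`, then for every `x ∈ ℝ⁴` there is
`y ∈ ℝ⁴` with `ḡ·X(x)·ĝ = X(y)` and `y₀² − y₁² − y₂² − y₃² = x₀² − x₁² − x₂² − x₃²`:
twisted conjugation by a unit complex quaternion preserves the real form
`{i·x₀ + x₁I + x₂J + x₃JI}` of `ℝ^{1,3}` together with its quadratic form. -/
theorem stmt7 (g : Quaternion ℂ) (hg : g * qbar g = 1) :
    ∀ x : Fin 4 → ℝ, ∃ y : Fin 4 → ℝ,
      qbar g * Xq x * qhat g = Xq y ∧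
      y 0 ^ 2 - y 1 ^ 2 - y 2 ^ 2 - y 3 ^ 2 = x 0 ^ 2 - x 1 ^ 2 - x 2 ^ 2 - x 3 ^ 2 := by
  intro x
  set X := Xq x with hX
  set Y := qbar g * X * qhat g with hY
  -- key symmetry: qhat Y = - qbar Y
  have hkey : qhat Y = - qbar Y := by
    have h1 : qhat Y = qhat (qbar g) * qhat X * g := by
      rw [hY, qhat_mul, qhat_mul, qhat_qhat]
    have h2 : qbar Y = qhat (qbar g) * qbar X * g := by
      rw [hY, qbar_eq_star, star_mul, star_mul, ← qbar_eq_star X,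
        ← qbar_eq_star (qhat g), ← qbar_eq_star (qbar g), qhat_qbar]
      show qbar (qhat g) * (qbar X * qbar (qbar g)) = qhat (qbar g) * qbar X * g
      rw [← qhat_qbar]
      have : qbar (qbar g) = g := by ext <;> simp [qbar]
      rw [this, mul_assoc]
    rw [h1, h2, hX, qhat_Xq]
    rw [show qhat (qbar g) * -qbar (Xq x) = -(qhat (qbar g) * qbar (Xq x)) from @mul_neg (Quaternion ℂ) _ _ _ _]
    exact @neg_mul (Quaternion ℂ) _ _ _ _
  -- components
  have h0 : starRingEnd ℂ Y.re = - Y.re := congrArg QuaternionAlgebra.re hkey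
  have h1 : starRingEnd ℂ Y.imI = Y.imI := by
    have := congrArg QuaternionAlgebra.imI hkey; exact this.trans (neg_neg _)
  have h2 : starRingEnd ℂ Y.imJ = Y.imJ := by
    have := congrArg QuaternionAlgebra.imJ hkey; exact this.trans (neg_neg _)
  have h3 : starRingEnd ℂ Y.imK = Y.imK := by
    have := congrArg QuaternionAlgebra.imK hkey; exact this.trans (neg_neg _)
  have hre0 : Y.re.re = 0 := by
    have h := congrArg Complex.re h0
    simp [Complex.conj_re] at h
    linarith
  have e0 : Y.re = Complex.I * (Y.re.im : ℂ) := by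
    apply Complex.ext <;> simp [hre0]
  have e1 : Y.imI = ((Y.imI.re : ℝ) : ℂ) := (Complex.conj_eq_iff_re.mp h1).symm
  have e2 : Y.imJ = ((Y.imJ.re : ℝ) : ℂ) := (Complex.conj_eq_iff_re.mp h2).symm
  have e3 : Y.imK = ((Y.imK.re : ℝ) : ℂ) := (Complex.conj_eq_iff_re.mp h3).symm
  refine ⟨![Y.re.im, Y.imI.re, Y.imJ.re, -(Y.imK.re)], ?_, ?_⟩
  · show Y = _
    ext
    · simpa [Xq] using e0
    · simpa [Xq] using e1
    · simpa [Xq] using e2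
    · simpa [Xq] using e3
  · -- quadratic form
    have hns : Quaternion.normSq g = 1 := by
      have : ((Quaternion.normSq g : ℂ) : Quaternion ℂ) = 1 := by
        rw [← Quaternion.self_mul_star, ← qbar_eq_star, hg]
      rw [← Quaternion.coe_one] at this
      exact Quaternion.coe_injective this
    have hnY : Quaternion.normSq Y = Quaternion.normSq X := by
      rw [hY, qbar_eq_star, map_mul, map_mul, Quaternion.normSq_star, hns,
        normSq_qhat, hns, map_one, one_mul, mul_one]
    have nsq : ∀ z : Fin 4 → ℝ, Quaternion.normSq (Xq z)
        = ((- z 0 ^ 2 + z 1 ^ 2 + z 2 ^ 2 + z 3 ^ 2 : ℝ) : ℂ) := by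
      intro z
      simp [Quaternion.normSq_def', mul_pow, Complex.I_sq]
    have hYy : Y = Xq ![Y.re.im, Y.imI.re, Y.imJ.re, -(Y.imK.re)] := by
      ext
      · simpa [Xq] using e0
      · simpa [Xq] using e1
      · simpa [Xq] using e2
      · simpa [Xq] using e3
    rw [hYy, nsq, nsq] at hnY
    have := Complex.ofReal_injective hnY
    simp at this ⊢
    linarith
end
end

section
/- Let a, b ∈ ℂ with |a|² > |b|², set g := (1/2)(1 + iI)(a + bJ) ∈ ℍ^ℂ and D := |a|² − |b|². Then (2i/D)·ḡ·ĝ = I + ( i·y₀·1 + y₂·J + y₃·(JI) ) for some real numbers y₀, y₂, y₃ satisfying −y₀² + y₂² + y₃² = −1 and y₀ ≥ 1. (This shows that the map π(g) := (2i/|g|²)·ḡ·ĝ, used to define the hyperbolic Gauss map, takes values in I + ℍ², where ℍ² := {i·x₀ + x₂J + x₃JI : x₀, x₂, x₃ ∈ ℝ, −x₀² + x₂² + x₃² = −1, x₀ > 0}.) -/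
/-!
`ℍ^ℂ` is modelled as `Quaternion ℂ` (complex coefficients on `1, I, J, K`, central complex
unit `i = Complex.I`, `I² = J² = K² = −1`, `I*J = K = −J*I`, so `JI = −K`).  `qbar` is the
quaternionic conjugate and `qhat` the coefficientwise complex conjugate.
-/

noncomputable section

/-- The element `g := (1/2)(1 + iI)(a + bJ) ∈ ℍ^ℂ`. -/
def gab (a b : ℂ) : Quaternion ℂ :=
  (2 : ℂ)⁻¹ • ((⟨1, Complex.I, 0, 0⟩ : Quaternion ℂ) * (⟨a, 0, b, 0⟩ : Quaternion ℂ))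

lemma prod_formula (a b : ℂ) :
    qbar (gab a b) * qhat (gab a b) =
      ⟨(a * starRingEnd ℂ a + b * starRingEnd ℂ b) / 2,
        -Complex.I * (a * starRingEnd ℂ a - b * starRingEnd ℂ b) / 2,
        (a * starRingEnd ℂ b - starRingEnd ℂ a * b) / 2,
        -Complex.I * (a * starRingEnd ℂ b + starRingEnd ℂ a * b) / 2⟩ := by
  have hI2 : Complex.I * Complex.I = -1 := Complex.I_mul_I
  apply Quaternion.ext <;>
    simp only [Quaternion.re_mul, Quaternion.imI_mul, Quaternion.imJ_mul, Quaternion.imK_mul] <;>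
    simp only [gab, qbar, qhat, QuaternionAlgebra.re_mul, QuaternionAlgebra.imI_mul,
      QuaternionAlgebra.imJ_mul, QuaternionAlgebra.imK_mul, QuaternionAlgebra.re_smul,
      QuaternionAlgebra.imI_smul, QuaternionAlgebra.imJ_smul, QuaternionAlgebra.imK_smul,
      Quaternion.re_mul, Quaternion.imI_mul, Quaternion.imJ_mul, Quaternion.imK_mul,
      Quaternion.re_smul, Quaternion.imI_smul, Quaternion.imJ_smul, Quaternion.imK_smul,
      smul_eq_mul, map_mul, map_add, map_sub, map_neg, map_zero, map_one, map_inv₀,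
      map_ofNat, Complex.conj_I, mul_zero, zero_mul, mul_one, one_mul, add_zero, zero_add,
      neg_neg, mul_neg, neg_mul, sub_zero, zero_sub] <;>
    first
    | ring1
    | linear_combination (-(a * starRingEnd ℂ a) - b * starRingEnd ℂ b) / 4 * hI2
    | linear_combination (-(a * starRingEnd ℂ b) + starRingEnd ℂ a * b) / 4 * hI2

/-- For `a, b ∈ ℂ` with `|a|² > |b|²`, `g := (1/2)(1+iI)(a+bJ)` and
`D := |a|² − |b|²`, one has `(2i/D)·ḡ·ĝ = I + (i·y₀·1 + y₂·J + y₃·(JI))` for some reals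
`y₀, y₂, y₃` with `−y₀² + y₂² + y₃² = −1` and `y₀ ≥ 1`; i.e. the map
`π(g) = (2i/|g|²)·ḡ·ĝ` defining the hyperbolic Gauss map takes values in `I + ℍ²`. -/
theorem stmt8 (a b : ℂ) (hab : ‖b‖ ^ 2 < ‖a‖ ^ 2) :
    ∃ y₀ y₂ y₃ : ℝ,
      (2 * Complex.I / ((‖a‖ ^ 2 - ‖b‖ ^ 2 : ℝ) : ℂ)) •
          (qbar (gab a b) * qhat (gab a b))
        = (⟨0, 1, 0, 0⟩ : Quaternion ℂ)
            + (⟨Complex.I * (y₀ : ℂ), 0, ((y₂ : ℝ) : ℂ), -((y₃ : ℝ) : ℂ)⟩ : Quaternion ℂ) ∧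
      -(y₀ ^ 2) + y₂ ^ 2 + y₃ ^ 2 = -1 ∧ 1 ≤ y₀ := by
  have hD : (0:ℝ) < ‖a‖ ^ 2 - ‖b‖ ^ 2 := by linarith
  set D : ℝ := ‖a‖ ^ 2 - ‖b‖ ^ 2 with hDdef
  have hDne : (D:ℂ) ≠ 0 := by exact_mod_cast hD.ne'
  have hDC : (D:ℂ) = a * starRingEnd ℂ a - b * starRingEnd ℂ b := by
    rw [Complex.mul_conj, Complex.mul_conj, hDdef, Complex.sq_norm, Complex.sq_norm]
    push_cast; ring
  refine ⟨(‖a‖ ^ 2 + ‖b‖ ^ 2) / D,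
    (-2 * (a * starRingEnd ℂ b).im) / D, (-2 * (a * starRingEnd ℂ b).re) / D, ?_, ?_, ?_⟩
  · have hNC : ((‖a‖ ^ 2 + ‖b‖ ^ 2 : ℝ) : ℂ)
        = a * starRingEnd ℂ a + b * starRingEnd ℂ b := by
      rw [Complex.mul_conj, Complex.mul_conj, Complex.sq_norm, Complex.sq_norm]; push_cast; ring
    have hsub : a * starRingEnd ℂ b - starRingEnd ℂ a * b
        = 2 * ((a * starRingEnd ℂ b).im : ℝ) * Complex.I := by
      have := Complex.sub_conj (a * starRingEnd ℂ b)
      simpa [map_mul, Complex.conj_conj, mul_comm] using this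
    have hadd : a * starRingEnd ℂ b + starRingEnd ℂ a * b
        = 2 * ((a * starRingEnd ℂ b).re : ℝ) := by
      have := Complex.add_conj (a * starRingEnd ℂ b)
      simpa [map_mul, Complex.conj_conj, mul_comm] using this
    rw [prod_formula]
    erw [QuaternionAlgebra.smul_mk]
    ext <;>
      simp only [QuaternionAlgebra.re_add, QuaternionAlgebra.imI_add, QuaternionAlgebra.imJ_add,
        QuaternionAlgebra.imK_add, QuaternionAlgebra.re_smul, QuaternionAlgebra.imI_smul,
        QuaternionAlgebra.imJ_smul, QuaternionAlgebra.imK_smul, Quaternion.re_add,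
        Quaternion.imI_add, Quaternion.imJ_add, Quaternion.imK_add, Quaternion.re_smul,
        Quaternion.imI_smul, Quaternion.imJ_smul, Quaternion.imK_smul, smul_eq_mul]
    · rw [Complex.ofReal_div, hNC]
      field_simp
      ring
    · rw [← hDC]
      field_simp
      linear_combination (-1 : ℂ) * Complex.I_mul_I
    · rw [hsub, Complex.ofReal_div]
      field_simp
      push_cast
      linear_combination (2 * ((a * starRingEnd ℂ b).im : ℂ))
        * Complex.I_mul_I
    · rw [hadd, Complex.ofReal_div]
      field_simp
      push_cast
      linear_combination (-2 * ((a * starRingEnd ℂ b).re : ℂ))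
        * Complex.I_mul_I
  · have habs : (a * starRingEnd ℂ b).re ^ 2 + (a * starRingEnd ℂ b).im ^ 2
        = ‖a‖ ^ 2 * ‖b‖ ^ 2 := by
      have h1 := Complex.sq_norm (a * starRingEnd ℂ b)
      rw [Complex.normSq_apply, norm_mul, Complex.norm_conj] at h1
      nlinarith [h1]
    have hD2 : D ^ 2 ≠ 0 := pow_ne_zero 2 hD.ne'
    have key : (‖a‖ ^ 2 + ‖b‖ ^ 2) ^ 2
        - ((-2 * (a * starRingEnd ℂ b).im) ^ 2 + (-2 * (a * starRingEnd ℂ b).re) ^ 2)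
        = D ^ 2 := by
      rw [hDdef]; linear_combination (-4 : ℝ) * habs
    rw [div_pow, div_pow, div_pow, ← neg_div, ← add_div, ← add_div,
      div_eq_iff hD2]
    linear_combination (-1 : ℝ) * key
  · rw [le_div_iff₀ hD]
    nlinarith [sq_nonneg (‖b‖)]
end
end
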